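/- If Conjecture: there is a constant C > 0 such that P_{1/2}(G × H) ≤ C · P_{1/2}(G) · P_{1/2}(H) for all graphs G, H were true, then from P_{1/2}(Q_{n_0}) ≤ 2^{n_0}/(2C) for some n_0, it follows by induction that P_{1/2}(Q_{2^s n_0}) ≤ 2^{(1 - 1/n_0) 2^s n_0} for all s ≥ 0; in particular this contradicts any lower bound of the form P_{1/2}(Q_n) ≥ 2^{n(1-ε)} for all ε > 0 and large n. -/

import Mathlib

/-- A `q`-pebbling move: remove `q` pebbles from a vertex `u` (which has at least `q`
pebbles) and add one pebble to a neighbour `u'`. -/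
def PebStep {V : Type*} [DecidableEq V] (q : ℕ) (G : SimpleGraph V) (D D' : V → ℕ) : Prop :=
  ∃ u u', G.Adj u u' ∧ q ≤ D u ∧
    D' = fun w => if w = u then D u - q else if w = u' then D u' + 1 else D w

/-- A configuration `D` is `v`-solvable if a finite sequence of `q`-pebbling moves
places a pebble on `v`. -/
def Solvable {V : Type*} [DecidableEq V] (q : ℕ) (G : SimpleGraph V) (D : V → ℕ) (v : V) : Prop :=
  ∃ D', Relation.ReflTransGen (PebStep q G) D D' ∧ 1 ≤ D' v

/-- The hypercube graph `Q_n` on vertex set `{0,1}^n`. -/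
def cubeGraph (n : ℕ) : SimpleGraph (Fin n → Bool) :=
  SimpleGraph.fromRel (fun x y => (Finset.univ.filter fun i => x i ≠ y i).card = 1)

/-- `P_{1/2}(Q_n)`: the least `k` such that a uniformly random configuration of `k`
pebbles on `Q_n` is solvable (under 2-pebbling) with probability at least `1/2`. -/
noncomputable def phalfCube (n : ℕ) : ℕ :=
  sInf {k : ℕ |
    Nat.card {D : (Fin n → Bool) → ℕ // (∑ w, D w) = k} ≤
      2 * Nat.card {D : (Fin n → Bool) → ℕ //
            (∑ w, D w) = k ∧ ∀ v, Solvable 2 (cubeGraph n) D v}}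

lemma phalfCube_zero_le : phalfCube 0 ≤ 1 := by
  apply Nat.sInf_le
  simp only [Set.mem_setOf_eq]
  have h : Nat.card {D : (Fin 0 → Bool) → ℕ // (∑ w, D w) = 1} =
      Nat.card {D : (Fin 0 → Bool) → ℕ //
          (∑ w, D w) = 1 ∧ ∀ v, Solvable 2 (cubeGraph 0) D v} := by
    apply Nat.card_congr
    apply Equiv.subtypeEquivRight
    intro D
    constructor
    · intro hsum
      refine ⟨hsum, fun v => ⟨D, Relation.ReflTransGen.refl, ?_⟩⟩
      have h1 : ∑ w, D w = D v :=
        Finset.sum_eq_single_of_mem v (Finset.mem_univ v)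
          (fun b _ hb => absurd (Subsingleton.elim b v) hb)
      omega
    · exact fun h => h.1
  rw [h]
  exact Nat.le_mul_of_pos_left _ two_pos

/-- if `P_{1/2}` were submultiplicative with constant `C` along
`Q_{a+b} = Q_a × Q_b` and `P_{1/2}(Q_{n₀}) ≤ 2^{n₀}/(2C)` for some `n₀`, then
`P_{1/2}(Q_{2^s n₀}) ≤ 2^{(1 - 1/n₀) 2^s n₀}` for all `s`; in particular no lower
bound of the form `P_{1/2}(Q_n) ≥ 2^{n(1-ε)}` for every `ε > 0` can hold. -/
theorem stmt12 (C : ℝ) (hC : 0 < C)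
    (hconj : ∀ a b : ℕ, (phalfCube (a + b) : ℝ) ≤ C * phalfCube a * phalfCube b)
    (n₀ : ℕ) (hn₀ : 0 < n₀) (h₀ : (phalfCube n₀ : ℝ) ≤ 2 ^ n₀ / (2 * C)) :
    (∀ s : ℕ, (phalfCube (2 ^ s * n₀) : ℝ) ≤
        (2 : ℝ) ^ ((1 - 1 / (n₀ : ℝ)) * ((2 ^ s * n₀ : ℕ) : ℝ))) ∧
    ¬ (∀ ε : ℝ, 0 < ε → ∀ᶠ n : ℕ in Filter.atTop,
        (2 : ℝ) ^ ((n : ℝ) * (1 - ε)) ≤ (phalfCube n : ℝ)) := by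
  have hn₀R : (0:ℝ) < (n₀:ℝ) := by exact_mod_cast hn₀
  set E : ℕ → ℝ := fun s => (1 - 1 / (n₀ : ℝ)) * ((2 ^ s * n₀ : ℕ) : ℝ) with hE
  have hEs : ∀ s, E s = (2:ℝ)^s * ((n₀:ℝ) - 1) := by
    intro s
    simp only [hE]
    push_cast
    field_simp
  have hsplit : ∀ s : ℕ, 2 ^ (s+1) * n₀ = 2 ^ s * n₀ + 2 ^ s * n₀ := by
    intro s; ring
  have first : ∀ s : ℕ, (phalfCube (2 ^ s * n₀) : ℝ) ≤ (2:ℝ) ^ (E s) := by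
    by_cases hz : phalfCube n₀ = 0
    · have hall : ∀ s, phalfCube (2 ^ s * n₀) = 0 := by
        intro s
        induction s with
        | zero => simpa using hz
        | succ s ih =>
          have h := hconj (2 ^ s * n₀) (2 ^ s * n₀)
          rw [← hsplit s, ih] at h
          simp only [Nat.cast_zero, mul_zero] at h
          exact_mod_cast le_antisymm (by exact_mod_cast h) (Nat.zero_le _)
      intro s
      rw [hall s]
      push_cast
      positivity
    · have hp1 : (1:ℝ) ≤ (phalfCube n₀ : ℝ) := by
        exact_mod_cast Nat.one_le_iff_ne_zero.mpr hz
      have hCp : (phalfCube n₀ : ℝ) ≤ C * (phalfCube 0 : ℝ) * (phalfCube n₀ : ℝ) := by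
        simpa using hconj 0 n₀
      have hp0' : (phalfCube 0 : ℝ) ≤ 1 := by exact_mod_cast phalfCube_zero_le
      have hp0nn : (0:ℝ) ≤ (phalfCube 0 : ℝ) := Nat.cast_nonneg _
      have hC1 : 1 ≤ C := by
        by_contra hlt
        push_neg at hlt
        have h3 : C * (phalfCube 0 : ℝ) * (phalfCube n₀ : ℝ) ≤
            C * 1 * (phalfCube n₀ : ℝ) :=
          mul_le_mul_of_nonneg_right (mul_le_mul_of_nonneg_left hp0' hC.le)
            (Nat.cast_nonneg _)
        have h4 : (phalfCube n₀ : ℝ) ≤ C * (phalfCube n₀ : ℝ) := by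
          simpa using hCp.trans h3
        have h5 : (0:ℝ) < (1 - C) * (phalfCube n₀ : ℝ) :=
          mul_pos (by linarith) (by linarith)
        nlinarith
      have key : ∀ s, (phalfCube (2 ^ s * n₀) : ℝ) ≤ (2:ℝ) ^ (E s) / C := by
        intro s
        induction s with
        | zero =>
          have he0 : E 0 = (n₀:ℝ) - 1 := by rw [hEs]; simp
          have h2 : (2:ℝ) ^ (E 0) = 2 ^ n₀ / 2 := by
            rw [he0, Real.rpow_sub (by norm_num), Real.rpow_natCast, Real.rpow_one]
          rw [h2]
          simpa [div_div] using h₀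
        | succ s ih =>
          have h := hconj (2 ^ s * n₀) (2 ^ s * n₀)
          rw [← hsplit s] at h
          have hx : (0:ℝ) ≤ (phalfCube (2 ^ s * n₀) : ℝ) := Nat.cast_nonneg _
          have hy : (0:ℝ) < (2:ℝ) ^ (E s) := Real.rpow_pos_of_pos two_pos _
          have hEsucc : E (s+1) = E s + E s := by rw [hEs, hEs]; ring
          have h2 : (2:ℝ) ^ (E (s+1)) = (2:ℝ) ^ (E s) * (2:ℝ) ^ (E s) := by
            rw [hEsucc, Real.rpow_add two_pos]
          calc (phalfCube (2 ^ (s+1) * n₀) : ℝ)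
              ≤ C * (phalfCube (2 ^ s * n₀) : ℝ) * (phalfCube (2 ^ s * n₀) : ℝ) := h
            _ ≤ C * ((2:ℝ) ^ (E s) / C) * ((2:ℝ) ^ (E s) / C) :=
                mul_le_mul (mul_le_mul_of_nonneg_left ih hC.le) ih hx (by positivity)
            _ = (2:ℝ) ^ (E (s+1)) / C := by rw [h2]; field_simp
      intro s
      calc (phalfCube (2 ^ s * n₀) : ℝ) ≤ (2:ℝ) ^ (E s) / C := key s
        _ ≤ (2:ℝ) ^ (E s) := by
            have hy : (0:ℝ) < (2:ℝ) ^ (E s) := Real.rpow_pos_of_pos two_pos _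
            rw [div_le_iff₀ hC]
            nlinarith
  refine ⟨first, ?_⟩
  intro H
  have hε : (0:ℝ) < 1 / (2 * n₀) := by positivity
  obtain ⟨N, hN⟩ := (Filter.eventually_atTop).mp (H (1 / (2 * n₀)) hε)
  set n : ℕ := 2 ^ N * n₀ with hn
  have hNn : N ≤ n := by
    calc N ≤ 2 ^ N := Nat.le_of_lt (Nat.lt_two_pow_self (n := N))
      _ ≤ 2 ^ N * n₀ := Nat.le_mul_of_pos_right _ hn₀
  have h1 := hN n hNn
  have h2 := first N
  have hnpos : (0:ℝ) < (n:ℝ) := by positivity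
  have hlt : (1 - 1 / (n₀:ℝ)) * (n:ℝ) < (n:ℝ) * (1 - 1 / (2 * n₀)) := by
    have : 1 / (2 * (n₀:ℝ)) < 1 / (n₀:ℝ) := by
      apply div_lt_div_of_pos_left one_pos hn₀R
      linarith
    nlinarith
  have := (Real.rpow_lt_rpow_left_iff (x := 2) one_lt_two).mpr hlt
  have hchain : (2:ℝ) ^ ((n:ℝ) * (1 - 1 / (2 * (n₀:ℝ)))) ≤
      (2:ℝ) ^ ((1 - 1 / (n₀:ℝ)) * (n:ℝ)) := le_trans h1 h2
  linarith
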